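/- arXiv:math/0505033 — 2 statements merged into one kernel-verified Lean document; each statement's English description precedes it below -/
import Mathlib

section
/- Let R be a commutative ring, n and i positive integers, x₁,…,xₙ ∈ R, and n₁,…,n_i positive integers. Then ∏_{t=1}^{i} s_{n_t}(x₁,…,xₙ) = ∑_{π∈Π_i} ∑_{f} ∏_{B∈π} x_{f(B)}^{m_B}, where m_B = ∑_{t∈B} n_t and the inner sum ranges over all injective functions f from the blocks of π to {1,…,n}. This expresses products of power sum symmetric polynomials in terms of augmented monomial symmetric polynomials. -/
open Finset

section Aux

variable {α : Type*} [Fintype α] [DecidableEq α]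

private lemma parts_eq_image_part (P : Finpartition (univ : Finset α)) :
    P.parts = univ.image P.part := by
  ext B
  simp only [mem_image, mem_univ, true_and]
  constructor
  · intro hB
    obtain ⟨a, ha⟩ := P.nonempty_of_mem_parts hB
    exact ⟨a, P.part_eq_of_mem hB ha⟩
  · rintro ⟨a, rfl⟩
    exact P.part_mem.mpr (mem_univ a)

private lemma finpartition_eq_of_part_eq {P Q : Finpartition (univ : Finset α)}
    (h : ∀ a, P.part a = Q.part a) : P = Q := by
  ext1
  rw [parts_eq_image_part P, parts_eq_image_part Q]
  exact image_congr fun a _ => h a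

private def kerPart {n : ℕ} (g : α → Fin n) : Finpartition (univ : Finset α) :=
  letI : DecidableRel (Setoid.ker g).r := fun a b => decEq (g a) (g b)
  Finpartition.ofSetoid (Setoid.ker g)

private lemma mem_kerPart_part {n : ℕ} (g : α → Fin n) (a b : α) :
    b ∈ (kerPart g).part a ↔ g a = g b := by
  letI : DecidableRel (Setoid.ker g).r := fun a b => decEq (g a) (g b)
  exact Finpartition.mem_part_ofSetoid_iff_rel

private lemma prod_parts (π : Finpartition (univ : Finset α)) {M : Type*} [CommMonoid M]
    (h : α → M) : ∏ a, h a = ∏ B ∈ π.parts, ∏ a ∈ B, h a := by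
  calc ∏ a, h a = ∏ a ∈ π.parts.biUnion id, h a := by
        conv_lhs => rw [← π.sup_parts, Finset.sup_eq_biUnion]
    _ = ∏ B ∈ π.parts, ∏ a ∈ id B, h a := Finset.prod_biUnion π.supIndep.pairwiseDisjoint
    _ = ∏ B ∈ π.parts, ∏ a ∈ B, h a := rfl

end Aux

/-- For `x₁,…,xₙ ∈ R` and positive integers `n₁,…,n_i`,
`∏_{t=1}^i s_{n_t}(x) = ∑_{π ∈ Π_i} ∑_{f} ∏_{B ∈ π} x_{f(B)}^{m_B}`, with `m_B = ∑_{t ∈ B} n_t`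
and `f` ranging over injective functions from the blocks of `π` to `{1,…,n}`:
products of power sums in terms of augmented monomial symmetric polynomials. -/
theorem power_sum_products_in_terms_of_augmented_monomials
    (R : Type*) [CommRing R] (n i : ℕ) (hn : 0 < n) (hi : 0 < i)
    (x : Fin n → R) (nn : Fin i → ℕ) (hnn : ∀ t, 0 < nn t) :
    ∏ t : Fin i, (∑ l : Fin n, x l ^ nn t)
      = ∑ π : Finpartition (univ : Finset (Fin i)),
          ∑ f ∈ (univ : Finset ({B // B ∈ π.parts} → Fin n)).filter Function.Injective,
            ∏ B : {B // B ∈ π.parts}, x (f B) ^ (∑ t ∈ B.val, nn t) := by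
  classical
  rw [Fintype.prod_sum (fun t l => x l ^ nn t)]
  rw [← Finset.sum_fiberwise (univ : Finset (Fin i → Fin n)) (fun g => kerPart g)
    (fun g => ∏ t, x (g t) ^ nn t)]
  refine Finset.sum_congr rfl fun π _ => ?_
  -- key: membership in part characterizes equal values
  have key : ∀ g : Fin i → Fin n, kerPart g = π → ∀ a b : Fin i, b ∈ π.part a ↔ g a = g b := by
    intro g hg a b
    rw [← hg]
    exact mem_kerPart_part g a b
  refine Finset.sum_nbij'
    (i := fun g B => g ((B : Finset (Fin i)).min' (π.nonempty_of_mem_parts B.2)))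
    (j := fun f t => f ⟨π.part t, π.part_mem.mpr (mem_univ t)⟩) ?_ ?_ ?_ ?_ ?_
  · -- maps to injective functions
    intro g hg
    simp only [mem_filter, mem_univ, true_and] at hg ⊢
    intro B C hBC
    have hBm := (B : Finset (Fin i)).min'_mem (π.nonempty_of_mem_parts B.2)
    have hCm := (C : Finset (Fin i)).min'_mem (π.nonempty_of_mem_parts C.2)
    have hB : π.part ((B : Finset (Fin i)).min' (π.nonempty_of_mem_parts B.2)) = B :=
      π.part_eq_of_mem B.2 hBm
    have : (C : Finset (Fin i)).min' (π.nonempty_of_mem_parts C.2) ∈ (B : Finset (Fin i)) := by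
      rw [← hB]
      exact (key g hg _ _).mpr hBC
    exact Subtype.ext (π.eq_of_mem_parts B.2 C.2 this hCm)
  · -- injective functions map back to fiber
    intro f hf
    simp only [mem_filter, mem_univ, true_and] at hf ⊢
    refine finpartition_eq_of_part_eq fun a => ?_
    ext b
    rw [mem_kerPart_part]
    constructor
    · intro h
      have : (⟨π.part a, π.part_mem.mpr (mem_univ a)⟩ : {B // B ∈ π.parts})
          = ⟨π.part b, π.part_mem.mpr (mem_univ b)⟩ := hf h
      have hpp : π.part a = π.part b := congrArg Subtype.val this
      rw [hpp]
      exact π.mem_part (mem_univ b)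
    · intro h
      exact congrArg f (Subtype.ext ((π.mem_part_iff_part_eq_part (mem_univ b) (mem_univ a)).mp
        h).symm)
  · -- left inverse
    intro g hg
    simp only [mem_filter, mem_univ, true_and] at hg
    funext t
    have hm := (π.part t).min'_mem (π.nonempty_of_mem_parts (π.part_mem.mpr (mem_univ t)))
    exact ((key g hg t _).mp hm).symm
  · -- right inverse
    intro f hf
    funext B
    have hBm := (B : Finset (Fin i)).min'_mem (π.nonempty_of_mem_parts B.2)
    exact congrArg f (Subtype.ext (π.part_eq_of_mem B.2 hBm))
  · -- values agree
    intro g hg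
    simp only [mem_filter, mem_univ, true_and] at hg
    rw [prod_parts π (fun t => x (g t) ^ nn t), ← Finset.prod_attach π.parts, univ_eq_attach]
    refine Finset.prod_congr rfl fun B _ => ?_
    have hBm := (B : Finset (Fin i)).min'_mem (π.nonempty_of_mem_parts B.2)
    have hB : π.part ((B : Finset (Fin i)).min' (π.nonempty_of_mem_parts B.2)) = B :=
      π.part_eq_of_mem B.2 hBm
    rw [← Finset.prod_pow_eq_pow_sum]
    refine Finset.prod_congr rfl fun t ht => ?_
    have : g ((B : Finset (Fin i)).min' (π.nonempty_of_mem_parts B.2)) = g t := by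
      apply (key g hg _ _).mp
      rw [hB]; exact ht
    exact congrArg (fun y => x y ^ nn t) this.symm
end

section
/- Let n and i be positive integers and let X₁,…,Xₙ be i.i.d. real-valued random variables with E[|X₁|^i] < ∞. Then E[(X₁ + X₂ + ⋯ + Xₙ)^i] = ∑_{π∈Π_i} (n)_{|π|} ∏_{B∈π} m_{|B|}; equivalently, E[(X₁+⋯+Xₙ)^i] = ∑_{k=1}^{i} (n)_k B_{i,k}(m₁, m₂, …, m_{i−k+1}), where B_{i,k} = ∑_{π∈Π_{i,k}} ∏_{B∈π} m_{|B|} is the incomplete exponential Bell polynomial summed over partitions of {1,…,i} into k blocks. -/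
open Finset MeasureTheory ProbabilityTheory

lemma aux_indep_prod {Ω : Type*} [MeasurableSpace Ω] {μ : Measure Ω} [IsProbabilityMeasure μ]
    {ι : Type*} {Y : ι → Ω → ℝ} (hY : iIndepFun Y μ)
    (hm : ∀ l, Measurable (Y l)) (hi : ∀ l, Integrable (Y l) μ) (s : Finset ι) :
    Integrable (∏ l ∈ s, Y l) μ ∧ ∫ ω, (∏ l ∈ s, Y l) ω ∂μ = ∏ l ∈ s, ∫ ω, Y l ω ∂μ := by
  classical
  induction s using Finset.induction_on with
  | empty =>
    refine ⟨?_, by simp⟩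
    simpa [Pi.one_def] using integrable_const (1:ℝ)
  | @insert a s ha IH =>
    have hindep : IndepFun (∏ j ∈ s, Y j) (Y a) μ :=
      hY.indepFun_finsetProd_of_notMem hm ha
    have h1 : Integrable ((∏ j ∈ s, Y j) * Y a) μ :=
      hindep.integrable_mul IH.1 (hi a)
    have h2 : ∫ ω, ((∏ j ∈ s, Y j) * Y a) ω ∂μ
        = (∫ ω, (∏ j ∈ s, Y j) ω ∂μ) * ∫ ω, Y a ω ∂μ :=
      hindep.integral_mul_eq_mul_integral IH.1.aestronglyMeasurable (hi a).aestronglyMeasurable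
    have hre : (∏ l ∈ insert a s, Y l) = (∏ j ∈ s, Y j) * Y a := by
      rw [Finset.prod_insert ha, mul_comm]
    refine ⟨hre ▸ h1, ?_⟩
    rw [hre, h2, IH.2, Finset.prod_insert ha, mul_comm]

lemma aux_parts_eq_image_part {α : Type*} [Fintype α] [DecidableEq α]
    (P : Finpartition (univ : Finset α)) : P.parts = univ.image P.part := by
  ext B
  simp only [mem_image, mem_univ, true_and]
  constructor
  · intro hB
    obtain ⟨a, ha⟩ := P.nonempty_of_mem_parts hB
    exact ⟨a, P.part_eq_of_mem hB ha⟩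
  · rintro ⟨a, rfl⟩
    exact P.part_mem.mpr (mem_univ a)

variable {i n : ℕ}

instance fkerDec (g : Fin i → Fin n) : DecidableRel ⇑(Setoid.ker g) :=
  fun a b => decEq (g a) (g b)

/-- The kernel partition of a function. -/
def fker (g : Fin i → Fin n) : Finpartition (univ : Finset (Fin i)) :=
  Finpartition.ofSetoid (Setoid.ker g)

lemma mem_fker_part (g : Fin i → Fin n) (a b : Fin i) :
    b ∈ (fker g).part a ↔ g a = g b :=
  Finpartition.mem_part_ofSetoid_iff_rel

lemma fker_part_eq (g : Fin i → Fin n) (a : Fin i) :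
    (fker g).part a = univ.filter (fun b => g a = g b) := by
  ext b; simp [mem_fker_part]

lemma fker_counting (hi : 0 < i) (π : Finpartition (univ : Finset (Fin i))) :
    ((univ : Finset (Fin i → Fin n)).filter (fun g => fker g = π)).card
      = n.descFactorial π.parts.card := by
  classical
  have key : ∀ g : Fin i → Fin n, fker g = π → ∀ a b : Fin i, (g a = g b ↔ b ∈ π.part a) := by
    intro g hg a b
    rw [← hg, mem_fker_part]
  -- representative of each part
  have hrep : ∀ B : {x // x ∈ π.parts}, ∃ a, a ∈ (B : Finset (Fin i)) :=
    fun B => π.nonempty_of_mem_parts B.2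
  set rep : {x // x ∈ π.parts} → Fin i := fun B => (hrep B).choose with hrepdef
  have hrepmem : ∀ B : {x // x ∈ π.parts}, rep B ∈ (B : Finset (Fin i)) :=
    fun B => (hrep B).choose_spec
  have hpartrep : ∀ B : {x // x ∈ π.parts}, π.part (rep B) = (B : Finset (Fin i)) :=
    fun B => π.part_eq_of_mem B.2 (hrepmem B)
  have hcard : Fintype.card ({x // x ∈ π.parts} ↪ Fin n) = n.descFactorial π.parts.card := by
    rw [Fintype.card_embedding_eq, Fintype.card_coe, Fintype.card_fin]
  rw [← hcard, ← Finset.card_univ]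
  refine Finset.card_bij' (i := fun g hg => ⟨fun B => g (rep B), ?_⟩)
    (j := fun φ _ => fun a => φ ⟨π.part a, π.part_mem.mpr (mem_univ a)⟩) ?_ ?_ ?_ ?_
  · -- injectivity of the embedding
    intro B B' hBB'
    simp only [Finset.mem_filter] at hg
    have := (key g hg.2 (rep B) (rep B')).mp hBB'
    rw [hpartrep B] at this
    exact Subtype.ext (π.eq_of_mem_parts B.2 B'.2 this (hrepmem B'))
  · intro g hg
    exact mem_univ _
  · -- j maps into the filter: fker (j φ) = π
    intro φ _
    simp only [Finset.mem_filter, mem_univ, true_and]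
    set g : Fin i → Fin n := fun a => φ ⟨π.part a, π.part_mem.mpr (mem_univ a)⟩ with hgdef
    have hpart : ∀ a, (fker g).part a = π.part a := by
      intro a
      rw [fker_part_eq]
      ext b
      simp only [mem_filter, mem_univ, true_and, hgdef]
      rw [φ.injective.eq_iff, Subtype.ext_iff]
      show π.part a = π.part b ↔ b ∈ π.part a
      exact eq_comm.trans (π.mem_part_iff_part_eq_part (mem_univ b) (mem_univ a)).symm
    apply Finpartition.ext
    rw [aux_parts_eq_image_part (fker g), aux_parts_eq_image_part π]
    exact Finset.image_congr (fun a _ => hpart a)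
  · -- left inverse
    intro g hg
    simp only [Finset.mem_filter] at hg
    funext a
    have hmem : rep ⟨π.part a, π.part_mem.mpr (mem_univ a)⟩ ∈ π.part a :=
      hrepmem ⟨π.part a, π.part_mem.mpr (mem_univ a)⟩
    exact ((key g hg.2 a _).mpr hmem).symm
  · -- right inverse
    intro φ _
    apply DFunLike.ext
    intro B
    exact congrArg φ (Subtype.ext (hpartrep B))

/-- For i.i.d. real random variables `X₁,…,Xₙ` with `E[|X₁|^i] < ∞`,
`E[(X₁+⋯+Xₙ)^i] = ∑_{π ∈ Π_i} (n)_{|π|} ∏_{B ∈ π} m_{|B|}`; equivalently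
`E[(X₁+⋯+Xₙ)^i] = ∑_{k=1}^i (n)_k B_{i,k}(m₁,…,m_{i−k+1})`, where
`B_{i,k} = ∑_{π ∈ Π_{i,k}} ∏_{B ∈ π} m_{|B|}` is the incomplete exponential Bell polynomial
summed over partitions of `{1,…,i}` into `k` blocks. -/
theorem moments_of_iid_sum_via_partitions
    {Ω : Type*} [MeasurableSpace Ω] (μ : Measure Ω) [IsProbabilityMeasure μ]
    (n i : ℕ) (hn : 0 < n) (hi : 0 < i)
    (X : Fin n → Ω → ℝ) (hmeas : ∀ l, Measurable (X l))
    (hindep : iIndepFun X μ)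
    (hident : ∀ l, IdentDistrib (X l) (X ⟨0, hn⟩) μ μ)
    (hint : Integrable (fun ω => |X ⟨0, hn⟩ ω| ^ i) μ) :
    (∫ ω, (∑ l : Fin n, X l ω) ^ i ∂μ
        = ∑ π : Finpartition (univ : Finset (Fin i)),
            (n.descFactorial π.parts.card : ℝ) *
              ∏ B ∈ π.parts, ∫ ω, X ⟨0, hn⟩ ω ^ B.card ∂μ) ∧
    (∫ ω, (∑ l : Fin n, X l ω) ^ i ∂μ
        = ∑ k ∈ Finset.Icc 1 i,
            (n.descFactorial k : ℝ) *
              ∑ π ∈ (univ : Finset (Finpartition (univ : Finset (Fin i)))).filter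
                  (fun π => π.parts.card = k),
                ∏ B ∈ π.parts, ∫ ω, X ⟨0, hn⟩ ω ^ B.card ∂μ) := by
  classical
  set X0 : Ω → ℝ := X ⟨0, hn⟩ with hX0
  set m : ℕ → ℝ := fun r => ∫ ω, X0 ω ^ r ∂μ with hm
  -- integrability of powers
  have hint0 : ∀ r : ℕ, r ≤ i → Integrable (fun ω => X0 ω ^ r) μ := by
    intro r hr
    refine Integrable.mono' ((integrable_const (1:ℝ)).add hint)
      ((hmeas _).pow_const r).aestronglyMeasurable ?_
    filter_upwards with ω
    have h1 : ‖X0 ω ^ r‖ = |X0 ω| ^ r := by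
      rw [Real.norm_eq_abs, abs_pow]
    rw [h1]
    rcases le_total |X0 ω| 1 with h | h
    · calc |X0 ω| ^ r ≤ 1 := pow_le_one₀ (abs_nonneg _) h
        _ ≤ 1 + |X0 ω| ^ i := le_add_of_nonneg_right (pow_nonneg (abs_nonneg _) _)
    · calc |X0 ω| ^ r ≤ |X0 ω| ^ i := pow_le_pow_right₀ h hr
        _ ≤ 1 + |X0 ω| ^ i := le_add_of_nonneg_left zero_le_one
  have hident' : ∀ (l : Fin n) (r : ℕ),
      IdentDistrib (fun ω => X l ω ^ r) (fun ω => X0 ω ^ r) μ μ :=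
    fun l r => (hident l).comp (measurable_id.pow_const r)
  have hintl : ∀ (l : Fin n) (r : ℕ), r ≤ i → Integrable (fun ω => X l ω ^ r) μ :=
    fun l r hr => ((hident' l r).integrable_iff).mpr (hint0 r hr)
  have hintegral : ∀ (l : Fin n) (r : ℕ), ∫ ω, X l ω ^ r ∂μ = m r :=
    fun l r => (hident' l r).integral_eq
  -- Claim A
  have claimA : ∀ g : Fin i → Fin n,
      Integrable (fun ω => ∏ j : Fin i, X (g j) ω) μ ∧
      ∫ ω, ∏ j : Fin i, X (g j) ω ∂μ = ∏ B ∈ (fker g).parts, m B.card := by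
    intro g
    set c : Fin n → ℕ := fun v => (univ.filter fun j => g j = v).card with hc
    have hcle : ∀ v, c v ≤ i := by
      intro v
      calc c v ≤ (univ : Finset (Fin i)).card := card_filter_le _ _
        _ = i := by simp
    set Y : Fin n → Ω → ℝ := fun v ω => X v ω ^ c v with hY
    have hYindep : iIndepFun Y μ :=
      hindep.comp (fun v x => x ^ c v) (fun v => measurable_id.pow_const _)
    have hYmeas : ∀ v, Measurable (Y v) := fun v => (hmeas v).pow_const _
    have hYint : ∀ v, Integrable (Y v) μ := fun v => hintl v (c v) (hcle v)
    obtain ⟨hInt, hEq⟩ := aux_indep_prod hYindep hYmeas hYint univ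
    have hpt : ∀ ω, ∏ j : Fin i, X (g j) ω = ∏ v : Fin n, Y v ω := by
      intro ω
      have h1 := Finset.prod_fiberwise_eq_prod_filter univ univ g (fun j => X (g j) ω)
      simp only [mem_univ, filter_true] at h1
      rw [← h1]
      refine Finset.prod_congr rfl fun v _ => ?_
      calc ∏ j ∈ univ.filter (fun j => g j = v), X (g j) ω
          = ∏ j ∈ univ.filter (fun j => g j = v), X v ω :=
            Finset.prod_congr rfl fun j hj => by rw [(mem_filter.mp hj).2]
        _ = X v ω ^ c v := by rw [Finset.prod_const, hc]
    have hfun : (fun ω => ∏ j : Fin i, X (g j) ω) = ∏ v : Fin n, Y v := by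
      funext ω
      rw [hpt ω, ← Finset.prod_apply]
    constructor
    · rw [hfun]; exact hInt
    · rw [show (∫ ω, ∏ j : Fin i, X (g j) ω ∂μ) = ∫ ω, (∏ v : Fin n, Y v) ω ∂μ by
        rw [← hfun]]
      rw [hEq]
      have hvals : ∀ v, ∫ ω, Y v ω ∂μ = m (c v) := fun v => hintegral v (c v)
      rw [Finset.prod_congr rfl fun v _ => hvals v]
      -- restrict to the image of g, then biject with parts
      have hm0 : m 0 = 1 := by simp [hm]
      have hsub : ∏ v ∈ univ.image g, m (c v) = ∏ v : Fin n, m (c v) := by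
        refine Finset.prod_subset (subset_univ _) fun v _ hv => ?_
        have : c v = 0 := by
          rw [hc]
          simp only [Finset.card_eq_zero, Finset.filter_eq_empty_iff]
          intro j _
          exact fun hj => hv (mem_image.mpr ⟨j, mem_univ j, hj⟩)
        rw [this, hm0]
      rw [← hsub]
      refine Finset.prod_bij (fun v _ => univ.filter (fun j => g j = v)) ?_ ?_ ?_ ?_
      · intro v hv
        obtain ⟨a, _, rfl⟩ := mem_image.mp hv
        have : univ.filter (fun j => g j = g a) = (fker g).part a := by
          rw [fker_part_eq]
          ext b; simp [eq_comm]
        rw [this]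
        exact (fker g).part_mem.mpr (mem_univ a)
      · intro v hv v' hv' hvv'
        obtain ⟨a, _, rfl⟩ := mem_image.mp hv
        have ha : a ∈ univ.filter (fun j => g j = g a) := by simp
        rw [hvv'] at ha
        exact (mem_filter.mp ha).2
      · intro B hB
        rw [aux_parts_eq_image_part] at hB
        obtain ⟨a, _, rfl⟩ := mem_image.mp hB
        refine ⟨g a, mem_image.mpr ⟨a, mem_univ a, rfl⟩, ?_⟩
        rw [fker_part_eq]
        ext b; simp [eq_comm]
      · intro v hv
        rfl
  -- expansion of the power
  have expand : ∀ ω, (∑ l : Fin n, X l ω) ^ i = ∑ g : Fin i → Fin n, ∏ j : Fin i, X (g j) ω := by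
    intro ω
    calc (∑ l : Fin n, X l ω) ^ i = ∏ _j : Fin i, ∑ l : Fin n, X l ω := by
          rw [Finset.prod_const, Finset.card_univ, Fintype.card_fin]
      _ = ∑ g ∈ Fintype.piFinset (fun _ : Fin i => (univ : Finset (Fin n))),
            ∏ j : Fin i, X (g j) ω := Finset.prod_univ_sum _ _
      _ = ∑ g : Fin i → Fin n, ∏ j : Fin i, X (g j) ω := by rw [Fintype.piFinset_univ]
  have first : ∫ ω, (∑ l : Fin n, X l ω) ^ i ∂μ
      = ∑ π : Finpartition (univ : Finset (Fin i)),
          (n.descFactorial π.parts.card : ℝ) * ∏ B ∈ π.parts, m B.card := by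
    calc ∫ ω, (∑ l : Fin n, X l ω) ^ i ∂μ
        = ∫ ω, ∑ g : Fin i → Fin n, ∏ j : Fin i, X (g j) ω ∂μ := by simp_rw [expand]
      _ = ∑ g : Fin i → Fin n, ∫ ω, ∏ j : Fin i, X (g j) ω ∂μ :=
          integral_finset_sum _ (fun g _ => (claimA g).1)
      _ = ∑ g : Fin i → Fin n, ∏ B ∈ (fker g).parts, m B.card :=
          Finset.sum_congr rfl fun g _ => (claimA g).2
      _ = ∑ π : Finpartition (univ : Finset (Fin i)),
            ∑ g ∈ univ.filter (fun g => fker g = π), ∏ B ∈ (fker g).parts, m B.card :=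
          (Finset.sum_fiberwise_of_maps_to (fun g _ => mem_univ (fker g)) _).symm
      _ = ∑ π : Finpartition (univ : Finset (Fin i)),
            (n.descFactorial π.parts.card : ℝ) * ∏ B ∈ π.parts, m B.card := by
          refine Finset.sum_congr rfl fun π _ => ?_
          rw [Finset.sum_congr rfl (fun g hg => by
            rw [(mem_filter.mp hg).2] :
              ∀ g ∈ univ.filter (fun g => fker g = π), _ = ∏ B ∈ π.parts, m B.card)]
          rw [Finset.sum_const, fker_counting hi π, nsmul_eq_mul]
  refine ⟨first, ?_⟩
  rw [first]
  have hmap : ∀ π : Finpartition (univ : Finset (Fin i)),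
      π ∈ (univ : Finset (Finpartition (univ : Finset (Fin i)))) → π.parts.card ∈ Finset.Icc 1 i := by
    intro π _
    rw [Finset.mem_Icc]
    constructor
    · haveI : Nonempty (Fin i) := Fin.pos_iff_nonempty.mp hi
      exact Finset.card_pos.mpr (π.parts_nonempty
        (by simpa using (univ_nonempty (α := Fin i)).ne_empty))
    · calc π.parts.card ≤ (univ : Finset (Fin i)).card := π.card_parts_le_card
        _ = i := by simp
  rw [← Finset.sum_fiberwise_of_maps_to hmap
    (fun π => (n.descFactorial π.parts.card : ℝ) * ∏ B ∈ π.parts, m B.card)]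
  refine Finset.sum_congr rfl fun k hk => ?_
  rw [Finset.mul_sum]
  refine Finset.sum_congr rfl fun π hπ => ?_
  rw [(mem_filter.mp hπ).2]
end
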